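/- Let L₊ be the open long ray. If U is an open subset of L₊ × [0,1] and a ∈ [0,1] is such that {α ∈ ω₁ : ⟨α,a⟩ ∈ U} is stationary in ω₁, then there are α ∈ ω₁ and n ∈ ω, n ≥ 1, such that U contains [α,ω₁) × ((a − 1/n, a + 1/n) ∩ [0,1]), where [α,ω₁) denotes the set of points of L₊ that are ≥ α. -/

import Mathlib

open Set Topology

noncomputable section

def omega1 : Ordinal := (Cardinal.aleph 1).ord

abbrev Omega1 := ↥(Set.Iio omega1)

abbrev ClosedLongRay := Omega1 ×ₗ ↥(Set.Ico (0 : ℝ) 1)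

instance : TopologicalSpace ClosedLongRay := Preorder.topology ClosedLongRay
instance : OrderTopology ClosedLongRay := ⟨rfl⟩

theorem omega1_pos : (0 : Ordinal) < omega1 := by
  rw [omega1, ← Cardinal.ord_zero]
  exact Cardinal.ord_lt_ord.mpr (Cardinal.aleph_pos 1)

def longRayZero : ClosedLongRay :=
  toLex (⟨0, omega1_pos⟩, ⟨0, by norm_num⟩)

abbrev LongRayPlus := {x : ClosedLongRay // x ≠ longRayZero}

def ordPt (α : Omega1) : ClosedLongRay := toLex (α, ⟨0, by norm_num⟩)

/-- A subset of `ω₁` is closed and unbounded (club) if it is unbounded and contains every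
nonzero ordinal which is a limit of its elements. -/
def IsClub' (C : Set Omega1) : Prop :=
  (∀ α : Omega1, ∃ β ∈ C, α < β) ∧
    ∀ α : Omega1, 0 < α.1 → (∀ β : Omega1, β < α → ∃ γ ∈ C, β < γ ∧ γ < α) → α ∈ C

/-- A subset of `ω₁` is stationary if it meets every club subset of `ω₁`. -/
def IsStationary' (S : Set Omega1) : Prop :=
  ∀ C : Set Omega1, IsClub' C → (S ∩ C).Nonempty

/- ### Auxiliary lemmas -/

theorem aleph0_lt_cof_omega1 : Cardinal.aleph0 < omega1.cof := by
  rw [omega1, Cardinal.isRegular_aleph_one.cof_eq]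
  exact Cardinal.aleph0_lt_aleph_one

theorem omega1_isLimit : Order.IsSuccLimit omega1 :=
  Cardinal.isSuccLimit_ord (Cardinal.aleph0_le_aleph 1)

theorem ord_lt_self_add_one (o : Ordinal) : o < o + 1 := by
  rw [Ordinal.add_one_eq_succ]; exact Order.lt_succ _

theorem succ_lt_omega1 {o : Ordinal} (h : o < omega1) : o + 1 < omega1 := by
  rw [Ordinal.add_one_eq_succ]; exact omega1_isLimit.succ_lt h

theorem lt_ordPt_of_fst_lt {x : ClosedLongRay} {α : Omega1} (h : (ofLex x).1 < α) :
    x < ordPt α :=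
  (Prod.Lex.lt_iff (x := x) (y := ordPt α)).mpr (Or.inl h)

theorem fst_lt_of_lt_ordPt {x : ClosedLongRay} {α : Omega1} (h : x < ordPt α) :
    (ofLex x).1 < α := by
  rcases (Prod.Lex.lt_iff (x := x) (y := ordPt α)).mp h with h' | ⟨-, h'⟩
  · exact h'
  · exact absurd h' (not_lt.mpr (ofLex x).2.2.1)

/-- If `U` is an open subset of `L₊ × [0,1]` whose intersection with the horizontal line
`L₊ × {a}` is stationary, then `U` contains `[α,ω₁) × ((a - 1/n, a + 1/n) ∩ [0,1])` for some
`α ∈ ω₁` and some `n ≥ 1`. -/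
theorem open_superset_of_stationary_line (U : Set (LongRayPlus × unitInterval))
    (hU : IsOpen U) (a : unitInterval)
    (hstat : IsStationary'
      {α : Omega1 | ∃ h : ordPt α ≠ longRayZero, ((⟨ordPt α, h⟩ : LongRayPlus), a) ∈ U}) :
    ∃ (α : Omega1) (n : ℕ), 1 ≤ n ∧ ∀ (x : LongRayPlus) (t : unitInterval),
      ordPt α ≤ x.1 → |(t : ℝ) - (a : ℝ)| < 1 / n → (x, t) ∈ U := by
  by_contra hcon
  push_neg at hcon
  choose X T h1 h2 h3 using fun (α : Omega1) (n : ℕ) => hcon α (n + 1) (by omega)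
  -- the first (ordinal) coordinate of a chosen counterexample point
  set coord : Omega1 → ℕ → Ordinal := fun α n => ((ofLex (X α n).1).1 : Ordinal) with hcoordd
  have hcoord_lt : ∀ α n, coord α n < omega1 := fun α n => ((ofLex (X α n).1).1).2
  -- a bounding function
  set g : Ordinal → Ordinal := fun β =>
    if h : β < omega1 then
      max (⨆ n : ℕ, coord ⟨β, h⟩ n + 1) (β + 1) else β + 1 with hgd
  have hg_succ : ∀ β, β + 1 ≤ g β := by
    intro β
    rw [hgd]; dsimp only; split
    · exact le_max_right _ _
    · exact le_rfl
  have hg_lt : ∀ β < omega1, g β < omega1 := by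
    intro β hβ
    rw [hgd]; dsimp only; rw [dif_pos hβ]
    refine max_lt ?_ (succ_lt_omega1 hβ)
    refine Ordinal.iSup_lt_ord_lift (f := fun n : ℕ => coord ⟨β, hβ⟩ n + 1) ?_
      fun n => succ_lt_omega1 (hcoord_lt _ n)
    rw [Cardinal.mk_nat, Cardinal.lift_aleph0]; exact aleph0_lt_cof_omega1
  have hg_coord : ∀ (α : Omega1) (n : ℕ), coord α n < g α.1 := by
    intro α n
    rw [hgd]; dsimp only; rw [dif_pos (show (α : Ordinal) < omega1 from α.2)]
    refine lt_of_lt_of_le (ord_lt_self_add_one _) (le_trans ?_ (le_max_left _ _))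
    have : (⟨α.1, α.2⟩ : Omega1) = α := rfl
    rw [this]
    exact le_ciSup (Ordinal.bddAbove_range _) n
  -- the monotone closure of g
  set G : Ordinal → Ordinal := fun β => Ordinal.blsub (β + 1) (fun b _ => g b) with hGd
  have hgG : ∀ β γ : Ordinal, β ≤ γ → g β < G γ := by
    intro β γ h
    exact Ordinal.lt_blsub (fun b _ => g b) β (lt_of_le_of_lt h (ord_lt_self_add_one γ))
  have hG_lt : ∀ β < omega1, G β < omega1 := by
    intro β hβ
    refine Ordinal.blsub_lt_ord ?_ fun i hi => hg_lt i (lt_trans hi (succ_lt_omega1 hβ))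
    rw [show omega1.cof = Cardinal.aleph 1 from by
      rw [omega1]; exact Cardinal.isRegular_aleph_one.cof_eq]
    exact Cardinal.lt_ord.mp (succ_lt_omega1 hβ)
  -- the club of closure points of g
  set C : Set Omega1 := {γ : Omega1 | 0 < γ.1 ∧ ∀ β : Omega1, β < γ → g β.1 < γ.1} with hCd
  have hclub : IsClub' C := by
    constructor
    · intro α
      have hα1 : α.1 + 1 < omega1 := succ_lt_omega1 α.2
      have hnfp : Ordinal.nfp G (α.1 + 1) < omega1 :=
        Ordinal.nfp_lt_ord aleph0_lt_cof_omega1 hG_lt hα1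
      refine ⟨⟨Ordinal.nfp G (α.1 + 1), hnfp⟩, ⟨?_, ?_⟩, ?_⟩
      · exact lt_of_lt_of_le (lt_of_le_of_lt (zero_le (a := α.1)) (ord_lt_self_add_one α.1))
          (Ordinal.le_nfp G _)
      · intro β hβlt
        obtain ⟨m, hm⟩ := Ordinal.lt_nfp_iff.mp (show β.1 < Ordinal.nfp G (α.1 + 1) from hβlt)
        have h4 : g β.1 < G (G^[m] (α.1 + 1)) := hgG _ _ hm.le
        have h5 : g β.1 < G^[m + 1] (α.1 + 1) := by rwa [Function.iterate_succ_apply']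
        exact lt_of_lt_of_le h5 (Ordinal.iterate_le_nfp G _ _)
      · exact show α.1 < Ordinal.nfp G (α.1 + 1) from
          lt_of_lt_of_le (ord_lt_self_add_one α.1) (Ordinal.le_nfp G _)
    · intro α hα0 hlim
      refine ⟨hα0, fun β hβ => ?_⟩
      obtain ⟨γ, hγC, hβγ, hγα⟩ := hlim β hβ
      exact lt_trans (hγC.2 β hβγ) hγα
  obtain ⟨αs, ⟨hne, hmem⟩, h0, hcl⟩ := hstat C hclub
  rw [isOpen_prod_iff] at hU
  obtain ⟨v, w, hv, hw, hpv, haw, hvw⟩ := hU _ _ hmem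
  rw [isOpen_induced_iff] at hv
  obtain ⟨v', hv', rfl⟩ := hv
  have hz : longRayZero < ordPt αs :=
    lt_ordPt_of_fst_lt (show (0 : Ordinal) < αs.1 from h0)
  have hnv' : v' ∈ 𝓝 (ordPt αs) := hv'.mem_nhds hpv
  obtain ⟨l, hl, hIoc⟩ := exists_Ioc_subset_of_mem_nhds hnv' ⟨longRayZero, hz⟩
  obtain ⟨ε, hε, hball⟩ := Metric.isOpen_iff.mp hw a haw
  obtain ⟨n, hn⟩ := exists_nat_one_div_lt hε
  set β : Omega1 := (ofLex l).1 with hβd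
  have hβαs : β < αs := fst_lt_of_lt_ordPt hl
  have hgβ : g β.1 < αs.1 := hcl β hβαs
  have hβ'lt : β.1 + 1 < αs.1 := lt_of_le_of_lt (hg_succ β.1) hgβ
  set β' : Omega1 := ⟨β.1 + 1, lt_trans hβ'lt αs.2⟩ with hβ'd
  have hβ'αs : β' < αs := hβ'lt
  have hcoordlt : coord β' n < αs.1 := lt_trans (hg_coord β' n) (hcl β' hβ'αs)
  have hxIoc : (X β' n).1 ∈ Set.Ioc l (ordPt αs) := by
    constructor
    · exact lt_of_lt_of_le
        (lt_ordPt_of_fst_lt (show β.1 < β'.1 from ord_lt_self_add_one β.1)) (h1 β' n)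
    · exact le_of_lt (lt_ordPt_of_fst_lt (show coord β' n < αs.1 from hcoordlt))
  have hxv : X β' n ∈ Subtype.val ⁻¹' v' := hIoc hxIoc
  have htw : T β' n ∈ w := by
    apply hball
    rw [Metric.mem_ball, Subtype.dist_eq, Real.dist_eq]
    refine lt_trans ?_ hn
    have := h2 β' n
    push_cast at this ⊢
    exact this
  exact h3 β' n (hvw ⟨hxv, htw⟩)
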